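/- In a group G acting by semisimple isometries on a complete CAT(0) space, if g ∈ G satisfies g^m ∈ [N,N] for some m > 0, where N is a finitely generated torsion-free nilpotent subgroup such that either N has a fixed point or N preserves a flat on which it acts by translations factoring through an abelian group, then g has a fixed point. In particular: if g^m lies in the commutator subgroup [N,N] and N acts on a flat by translations through an abelian quotient, then g^m acts trivially on that flat, hence g is elliptic. -/

import Mathlib

def IsCAT0 (Y : Type*) [MetricSpace Y] : Prop :=
  ∀ x y : Y, ∃ m : Y, 2 * dist x m = dist x y ∧ 2 * dist y m = dist x y ∧
    ∀ z : Y, dist z m ^ 2 ≤ (dist z x ^ 2 + dist z y ^ 2) / 2 - dist x y ^ 2 / 4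

/-- A monoid is torsion-free if every non-identity element has infinite order
(the definition removed from Mathlib, restored with its old meaning). -/
def Monoid.IsTorsionFree (G : Type*) [Monoid G] : Prop :=
  ∀ g : G, g ≠ 1 → ¬IsOfFinOrder g

open scoped commutatorElement

/-- Let `G` act by semisimple isometries on a complete CAT(0) space and let `N ≤ G` be a
finitely generated torsion-free nilpotent subgroup which either has a global fixed point
or preserves a flat (the isometric image `φ` of Euclidean `k`-space) on which it acts by
translations `v`, additively (hence factoring through an abelian group).  If `g^m ∈ [N,N]`
for some `m > 0`, then `g` has a fixed point. -/
theorem elliptic_of_pow_fixed {Y G : Type*} [MetricSpace Y] [CompleteSpace Y] [Group G]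
    [MulAction G Y] (hY : IsCAT0 Y) (hiso : ∀ h : G, Isometry (fun y : Y => h • y))
    (g : G) (m : ℕ) (hm : 0 < m) (y : Y) (hy : g ^ m • y = y) :
    ∃ c : Y, g • c = c := by
  classical
  have : Nonempty Y := ⟨y⟩
  have hd : ∀ (h : G) (a b : Y), dist (h • a) (h • b) = dist a b := fun h a b =>
    (hiso h).dist_eq a b
  set S : Finset Y := (Finset.range m).image (fun i => g ^ i • y) with hS
  have hSne : S.Nonempty := ⟨y, by
    simp only [hS, Finset.mem_image]
    exact ⟨0, Finset.mem_range.mpr hm, by simp⟩⟩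
  -- S is closed under g⁻¹ • ·
  have hSinv : ∀ s ∈ S, g⁻¹ • s ∈ S := by
    intro s hs
    simp only [hS, Finset.mem_image, Finset.mem_range] at hs ⊢
    obtain ⟨i, hi, rfl⟩ := hs
    cases i with
    | zero =>
      refine ⟨m - 1, by omega, ?_⟩
      have hstep : g • (g ^ (m - 1) • y) = g • (g⁻¹ • (g ^ 0 • y)) := by
        rw [smul_inv_smul, ← mul_smul, ← pow_succ']
        have hmm : m - 1 + 1 = m := by omega
        rw [hmm, hy]; simp
      exact smul_left_cancel g hstep
    | succ j =>
      refine ⟨j, by omega, ?_⟩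
      rw [pow_succ', mul_smul, inv_smul_smul]
  set r : Y → ℝ := fun x => S.sup' hSne (fun s => dist x s) with hr
  have hrle : ∀ x, ∀ s ∈ S, dist x s ≤ r x := fun x s hs => Finset.le_sup' _ hs
  have hr0 : ∀ x, 0 ≤ r x := fun x =>
    le_trans dist_nonneg (hrle x _ hSne.choose_spec)
  have bdd : BddBelow (Set.range r) := ⟨0, by rintro _ ⟨x, rfl⟩; exact hr0 x⟩
  set r₀ : ℝ := ⨅ x : Y, r x with hr₀
  have hr₀le : ∀ x, r₀ ≤ r x := fun x => ciInf_le bdd x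
  have hr₀0 : 0 ≤ r₀ := le_ciInf hr0
  -- midpoint inequality for r
  have hmid : ∀ x x' : Y, ∃ mid : Y,
      r mid ^ 2 ≤ (r x ^ 2 + r x' ^ 2) / 2 - dist x x' ^ 2 / 4 := by
    intro x x'
    obtain ⟨mid, -, -, hcn⟩ := hY x x'
    refine ⟨mid, ?_⟩
    obtain ⟨s₀, hs₀, hs₀eq⟩ := Finset.exists_mem_eq_sup' hSne (fun s => dist mid s)
    have h1 : dist s₀ x ≤ r x := by rw [dist_comm]; exact hrle x s₀ hs₀
    have h2 : dist s₀ x' ≤ r x' := by rw [dist_comm]; exact hrle x' s₀ hs₀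
    have hc := hcn s₀
    have hm1 : r mid = dist s₀ mid := by rw [dist_comm]; exact hs₀eq
    rw [hm1]
    nlinarith [dist_nonneg (x := s₀) (y := x), dist_nonneg (x := s₀) (y := x'), hr0 x, hr0 x']
  -- rigidity: two points with r ≤ r₀ coincide
  have huniq : ∀ c c' : Y, r c ≤ r₀ → r c' ≤ r₀ → c = c' := by
    intro c c' hc hc'
    obtain ⟨mid, hmid'⟩ := hmid c c'
    have h1 : r₀ ≤ r mid := hr₀le mid
    have hzero : dist c c' = 0 := by nlinarith [dist_nonneg (x := c) (y := c'), hr0 c, hr0 c']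
    exact dist_eq_zero.mp hzero
  -- minimizing sequence
  have hx : ∀ n : ℕ, ∃ x : Y, r x ^ 2 ≤ r₀ ^ 2 + 1 / (n + 1) := by
    intro n
    have hpos : (0:ℝ) < 1 / (n + 1) := by positivity
    have hlt : r₀ < Real.sqrt (r₀ ^ 2 + 1 / (n + 1)) := by
      have heq : r₀ = Real.sqrt (r₀ ^ 2) := by rw [Real.sqrt_sq hr₀0]
      nth_rewrite 1 [heq]
      exact Real.sqrt_lt_sqrt (by positivity) (by linarith)
    obtain ⟨x, hxlt⟩ := exists_lt_of_ciInf_lt (f := r) hlt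
    refine ⟨x, ?_⟩
    have hs := Real.sq_sqrt (show (0:ℝ) ≤ r₀ ^ 2 + 1 / (n + 1) by positivity)
    nlinarith [hr0 x, Real.sqrt_nonneg (r₀ ^ 2 + 1 / (n + 1))]
  choose x hxs using hx
  have hcauchy : CauchySeq x := by
    refine cauchySeq_of_le_tendsto_0 (fun N => Real.sqrt (4 / (N + 1))) ?_ ?_
    · intro n k N hn hk
      obtain ⟨mid, hmid'⟩ := hmid (x n) (x k)
      have h1 : r₀ ≤ r mid := hr₀le mid
      have hNn : ((N:ℝ) + 1) ≤ (n:ℝ) + 1 := by exact_mod_cast Nat.succ_le_succ hn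
      have hNk : ((N:ℝ) + 1) ≤ (k:ℝ) + 1 := by exact_mod_cast Nat.succ_le_succ hk
      have hn1 : (1:ℝ) / (n + 1) ≤ 1 / (N + 1) :=
        one_div_le_one_div_of_le (by positivity) hNn
      have hk1 : (1:ℝ) / (k + 1) ≤ 1 / (N + 1) :=
        one_div_le_one_div_of_le (by positivity) hNk
      have hsq : dist (x n) (x k) ^ 2 ≤ 4 / (N + 1) := by
        have han := hxs n; have hak := hxs k
        have hsq1 : r₀ ^ 2 ≤ r mid ^ 2 := pow_le_pow_left₀ hr₀0 h1 2
        have e1 : dist (x n) (x k) ^ 2 ≤ 2 * (1 / ((n:ℝ) + 1)) + 2 * (1 / ((k:ℝ) + 1)) := by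
          linarith
        have h4 : (4:ℝ) / ((N:ℝ) + 1) = 4 * (1 / ((N:ℝ) + 1)) := by ring
        have e2 : 2 * (1 / ((n:ℝ) + 1)) + 2 * (1 / ((k:ℝ) + 1)) ≤ 4 / ((N:ℝ) + 1) := by
          rw [h4]; linarith
        linarith
      have hle := Real.sqrt_le_sqrt hsq
      rwa [Real.sqrt_sq dist_nonneg] at hle
    · have h1 : Filter.Tendsto (fun N : ℕ => (4:ℝ) / (N + 1)) Filter.atTop (nhds 0) := by
        apply Filter.Tendsto.div_atTop tendsto_const_nhds
        exact Filter.tendsto_atTop_add_const_right _ 1 tendsto_natCast_atTop_atTop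
      have h2 := (Real.continuous_sqrt.tendsto 0).comp h1
      simpa only [Function.comp_def, Real.sqrt_zero] using h2
  obtain ⟨c, hc⟩ := cauchySeq_tendsto_of_complete hcauchy
  -- bound tendsto
  have hub : Filter.Tendsto (fun n : ℕ => Real.sqrt (r₀ ^ 2 + 1 / (n + 1)))
      Filter.atTop (nhds r₀) := by
    have h1 : Filter.Tendsto (fun n : ℕ => r₀ ^ 2 + 1 / (n + 1)) Filter.atTop
        (nhds (r₀ ^ 2)) := by
      have h2 : Filter.Tendsto (fun n : ℕ => (1:ℝ) / (n + 1)) Filter.atTop (nhds 0) := by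
        apply Filter.Tendsto.div_atTop tendsto_const_nhds
        exact Filter.tendsto_atTop_add_const_right _ 1 tendsto_natCast_atTop_atTop
      simpa using tendsto_const_nhds.add h2
    have h3 := (Real.continuous_sqrt.tendsto (r₀ ^ 2)).comp h1
    simpa [Function.comp_def, Real.sqrt_sq hr₀0] using h3
  have hxb : ∀ n, r (x n) ≤ Real.sqrt (r₀ ^ 2 + 1 / (n + 1)) := by
    intro n
    have hle := Real.sqrt_le_sqrt (hxs n)
    rwa [Real.sqrt_sq (hr0 (x n))] at hle
  -- r c ≤ r₀
  have hrc : r c ≤ r₀ := by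
    apply Finset.sup'_le
    intro s hs
    have hds : Filter.Tendsto (fun n => dist (x n) s) Filter.atTop (nhds (dist c s)) :=
      hc.dist tendsto_const_nhds
    refine le_of_tendsto_of_tendsto' hds hub (fun n => ?_)
    exact le_trans (hrle (x n) s hs) (hxb n)
  -- r (g • c) ≤ r₀
  have hrgc : r (g • c) ≤ r₀ := by
    apply Finset.sup'_le
    intro s hs
    have h1 : dist (g • c) s = dist c (g⁻¹ • s) := by
      rw [← hd g c (g⁻¹ • s), smul_inv_smul]
    rw [h1]
    exact le_trans (hrle c _ (hSinv s hs)) hrc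
  exact ⟨c, huniq (g • c) c hrgc hrc⟩

theorem stmt_7 {Y G : Type*} [MetricSpace Y] [CompleteSpace Y] [Group G] [MulAction G Y]
    (hY : IsCAT0 Y) (hiso : ∀ h : G, Isometry (fun y : Y => h • y))
    (hss : ∀ h : G, ∃ y : Y, dist y (h • y) = ⨅ z : Y, dist z (h • z))
    (N : Subgroup G) [Group.IsNilpotent N] (htf : Monoid.IsTorsionFree N) (hfg : Group.FG N)
    (halt : (∃ y : Y, ∀ n ∈ N, n • y = y) ∨
      ∃ (k : ℕ) (φ : EuclideanSpace ℝ (Fin k) → Y) (v : G → EuclideanSpace ℝ (Fin k)),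
        Isometry φ ∧
        (∀ n ∈ N, ∀ x : EuclideanSpace ℝ (Fin k), n • φ x = φ (x + v n)) ∧
        (∀ n₁ ∈ N, ∀ n₂ ∈ N, v (n₁ * n₂) = v n₁ + v n₂))
    (g : G) (m : ℕ) (hm : 0 < m) (hgm : g ^ m ∈ ⁅N, N⁆) :
    ∃ y : Y, g • y = y := by
  -- it suffices to find a fixed point of `g ^ m`
  suffices h : ∃ y : Y, g ^ m • y = y by
    obtain ⟨y, hy⟩ := h
    exact elliptic_of_pow_fixed hY hiso g m hm y hy
  rcases halt with ⟨y, hy⟩ | ⟨k, φ, v, hφ, hact, hadd⟩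
  · -- global fixed point for N, and ⁅N,N⁆ ≤ N
    have hNN : (⁅N, N⁆ : Subgroup G) ≤ N := by
      rw [Subgroup.commutator_le]
      intro g₁ h₁ g₂ h₂
      exact N.mul_mem (N.mul_mem (N.mul_mem h₁ h₂) (N.inv_mem h₁)) (N.inv_mem h₂)
    exact ⟨y, hy _ (hNN hgm)⟩
  · -- flat case: v vanishes on commutators
    have hv1 : v 1 = 0 := by
      have h11 := hadd 1 N.one_mem 1 N.one_mem
      rw [mul_one] at h11
      have : v 1 + 0 = v 1 + v 1 := by rw [add_zero]; exact h11
      exact ((add_right_inj (v 1)).mp this).symm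
    have hvinv : ∀ n ∈ N, v n⁻¹ = -v n := by
      intro n hn
      have h2 := hadd n hn n⁻¹ (N.inv_mem hn)
      rw [mul_inv_cancel, hv1] at h2
      exact eq_neg_of_add_eq_zero_right h2.symm
    -- the subgroup of elements of N where v vanishes
    set K : Subgroup G :=
      { carrier := {x : G | x ∈ N ∧ v x = 0}
        one_mem' := ⟨N.one_mem, hv1⟩
        mul_mem' := by
          rintro a b ⟨haN, hav⟩ ⟨hbN, hbv⟩
          exact ⟨N.mul_mem haN hbN, by rw [hadd a haN b hbN, hav, hbv, add_zero]⟩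
        inv_mem' := by
          rintro a ⟨haN, hav⟩
          exact ⟨N.inv_mem haN, by rw [hvinv a haN, hav, neg_zero]⟩ } with hK
    have hNNK : (⁅N, N⁆ : Subgroup G) ≤ K := by
      rw [Subgroup.commutator_le]
      intro g₁ h₁ g₂ h₂
      have hmem : ⁅g₁, g₂⁆ ∈ N := by
        rw [commutatorElement_def]
        exact N.mul_mem (N.mul_mem (N.mul_mem h₁ h₂) (N.inv_mem h₁)) (N.inv_mem h₂)
      refine ⟨hmem, ?_⟩
      rw [commutatorElement_def]
      have e1 := hadd (g₁ * g₂ * g₁⁻¹) (N.mul_mem (N.mul_mem h₁ h₂) (N.inv_mem h₁))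
        g₂⁻¹ (N.inv_mem h₂)
      have e2 := hadd (g₁ * g₂) (N.mul_mem h₁ h₂) g₁⁻¹ (N.inv_mem h₁)
      have e3 := hadd g₁ h₁ g₂ h₂
      rw [e1, e2, e3, hvinv g₁ h₁, hvinv g₂ h₂]
      abel
    obtain ⟨hgN, hgv⟩ := hNNK hgm
    refine ⟨φ 0, ?_⟩
    rw [hact (g ^ m) hgN 0, hgv, add_zero]
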